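/- Let λ ≠ 0 and A be real constants. The functions u₊(x,t) = (−(λ x t + A) + √((λ x t + A)² + 4 x t))/(2t) and u₋(x,t) = (−(λ x t + A) − √((λ x t + A)² + 4 x t))/(2t) satisfy the equation u_t + u²·u_x + λ·u² = 0 at every point (x,t) with t ≠ 0 and (λ x t + A)² + 4 x t > 0. -/

import Mathlib

open Real

lemma aux (lam A x t eps : ℝ) (ht : t ≠ 0) (heps : eps ^ 2 = 1)
    (hg : 0 < (lam * x * t + A) ^ 2 + 4 * x * t) :
    fderiv ℝ (fun p : ℝ × ℝ =>
        (-(lam * p.1 * p.2 + A) + eps * Real.sqrt ((lam * p.1 * p.2 + A) ^ 2 + 4 * p.1 * p.2))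
          / (2 * p.2)) (x, t) (0, 1)
      + ((-(lam * x * t + A) + eps * Real.sqrt ((lam * x * t + A) ^ 2 + 4 * x * t)) / (2 * t)) ^ 2
        * fderiv ℝ (fun p : ℝ × ℝ =>
        (-(lam * p.1 * p.2 + A) + eps * Real.sqrt ((lam * p.1 * p.2 + A) ^ 2 + 4 * p.1 * p.2))
          / (2 * p.2)) (x, t) (1, 0)
      + lam * ((-(lam * x * t + A) + eps * Real.sqrt ((lam * x * t + A) ^ 2 + 4 * x * t)) / (2 * t)) ^ 2
      = 0 := by
  have hfst : HasFDerivAt (fun p : ℝ × ℝ => p.1) (ContinuousLinearMap.fst ℝ ℝ ℝ) (x, t) :=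
    hasFDerivAt_fst
  have hsnd : HasFDerivAt (fun p : ℝ × ℝ => p.2) (ContinuousLinearMap.snd ℝ ℝ ℝ) (x, t) :=
    hasFDerivAt_snd
  have hB := (((hfst.const_mul lam).mul hsnd).add_const A)
  have hG0 := (hB.mul hB).add ((hfst.const_mul 4).mul hsnd)
  have hG : HasFDerivAt (fun p : ℝ × ℝ => (lam * p.1 * p.2 + A) ^ 2 + 4 * p.1 * p.2)
      (((lam * x * t + A) • ((lam * (x, t).1) • ContinuousLinearMap.snd ℝ ℝ ℝ +
          (x, t).2 • lam • ContinuousLinearMap.fst ℝ ℝ ℝ) +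
        (lam * x * t + A) • ((lam * (x, t).1) • ContinuousLinearMap.snd ℝ ℝ ℝ +
          (x, t).2 • lam • ContinuousLinearMap.fst ℝ ℝ ℝ)) +
       ((4 * (x, t).1) • ContinuousLinearMap.snd ℝ ℝ ℝ +
          (x, t).2 • (4:ℝ) • ContinuousLinearMap.fst ℝ ℝ ℝ)) (x, t) := by
    simpa only [pow_two, Pi.mul_def, Pi.add_def] using hG0
  have hGne : ((lam * x * t + A) ^ 2 + 4 * x * t) ≠ 0 := ne_of_gt hg
  have hS := hG.sqrt (by simpa using hGne)
  have hN := hB.neg.add (hS.const_mul eps)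
  have h2t : (2 : ℝ) * t ≠ 0 := mul_ne_zero two_ne_zero ht
  have hInv := (hasDerivAt_inv h2t).comp_hasFDerivAt (x, t) (hsnd.const_mul 2)
  have hU0 := hN.mul hInv
  rw [show (fun p : ℝ × ℝ =>
      (-(lam * p.1 * p.2 + A) + eps * Real.sqrt ((lam * p.1 * p.2 + A) ^ 2 + 4 * p.1 * p.2))
        / (2 * p.2)) = (fun p : ℝ × ℝ =>
      (-(lam * p.1 * p.2 + A) + eps * Real.sqrt ((lam * p.1 * p.2 + A) ^ 2 + 4 * p.1 * p.2))
        * (2 * p.2)⁻¹) from funext fun p => div_eq_mul_inv _ _]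
  have hU := hU0
  simp only [Function.comp_def, Pi.mul_def, Pi.add_def, Pi.neg_def] at hU
  rw [hU.fderiv]
  have hSpos : 0 < Real.sqrt ((lam * x * t + A) ^ 2 + 4 * x * t) := Real.sqrt_pos.mpr hg
  have hS2 : Real.sqrt ((lam * x * t + A) ^ 2 + 4 * x * t) ^ 2
      = (lam * x * t + A) ^ 2 + 4 * x * t := Real.sq_sqrt hg.le
  set S := Real.sqrt ((lam * x * t + A) ^ 2 + 4 * x * t) with hSdef
  simp only [ContinuousLinearMap.add_apply, ContinuousLinearMap.smul_apply,
    ContinuousLinearMap.neg_apply, ContinuousLinearMap.coe_fst',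
    ContinuousLinearMap.coe_snd', smul_eq_mul]
  field_simp
  linear_combination
    ((-8*eps^1*t^2) + (-4*eps^1*lam^2*x^1*t^3) + (-4*eps^1*lam^1*t^2*A^1) + (2*S^1*eps^2*lam^1*t^2) + (2*eps^3*lam^2*x^1*t^3) + (2*eps^3*lam^1*t^2*A^1) + (4*eps^3*t^2)) * hS2
    + ((-2*S^1*lam^3*x^2*t^4) + (-4*S^1*lam^2*x^1*t^3*A^1) + (-2*S^1*lam^1*t^2*A^2) + (-8*S^1*t^2*A^1) + (2*eps^1*lam^4*x^3*t^5) + (6*eps^1*lam^3*x^2*t^4*A^1) + (6*eps^1*lam^2*x^1*t^3*A^2) + (12*eps^1*lam^2*x^2*t^4) + (2*eps^1*lam^1*t^2*A^3) + (16*eps^1*lam^1*x^1*t^3*A^1) + (4*eps^1*t^2*A^2) + (16*eps^1*x^1*t^3)) * heps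

/-- the functions
`u±(x,t) = (−(λxt + A) ± √((λxt + A)² + 4xt))/(2t)` satisfy
`u_t + u²·u_x + λ·u² = 0` at every point with `t ≠ 0` and
`(λxt + A)² + 4xt > 0`. -/
theorem case1_invariant_solution_m_eq_k_eq_two
    (lam A : ℝ) (hlam : lam ≠ 0) :
    ∀ uP uM : ℝ × ℝ → ℝ,
      uP = (fun p : ℝ × ℝ =>
        (-(lam * p.1 * p.2 + A) + Real.sqrt ((lam * p.1 * p.2 + A) ^ 2 + 4 * p.1 * p.2))
          / (2 * p.2)) →
      uM = (fun p : ℝ × ℝ =>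
        (-(lam * p.1 * p.2 + A) - Real.sqrt ((lam * p.1 * p.2 + A) ^ 2 + 4 * p.1 * p.2))
          / (2 * p.2)) →
      ∀ x t : ℝ, t ≠ 0 → 0 < (lam * x * t + A) ^ 2 + 4 * x * t →
        (fderiv ℝ uP (x, t) (0, 1) + uP (x, t) ^ 2 * fderiv ℝ uP (x, t) (1, 0)
          + lam * uP (x, t) ^ 2 = 0) ∧
        (fderiv ℝ uM (x, t) (0, 1) + uM (x, t) ^ 2 * fderiv ℝ uM (x, t) (1, 0)
          + lam * uM (x, t) ^ 2 = 0) := by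
  intro uP uM hP hM x t ht hg
  subst hP hM
  constructor
  · have h := aux lam A x t 1 ht (by norm_num) hg
    simpa only [one_mul] using h
  · have h := aux lam A x t (-1) ht (by norm_num) hg
    simpa only [neg_one_mul, ← sub_eq_add_neg] using h
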